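/- Let f : ℝⁿ → ℝ be differentiable with continuous gradient, let x* be a global minimizer of f, and suppose there is a constant c > 0 such that ∫₀¹ ‖∇f(x* + t(x − x*))‖ dt ≤ c·‖∇f(x)‖ for every x ∈ ℝⁿ. Then (1/c)·(f(x) − f(x*)) ≤ ‖∇f(x)‖ · ‖x − x*‖ for all x ∈ ℝⁿ; that is, f ∈ W_PL(1/c²). -/

import Mathlib

open scoped RealInnerProductSpace BigOperators

theorem integral_gradient_bound_implies_WPL {n : ℕ} (f : EuclideanSpace ℝ (Fin n) → ℝ)
    (hdiff : Differentiable ℝ f) (hcont : Continuous fun x => gradient f x)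
    (xstar : EuclideanSpace ℝ (Fin n)) (hmin : ∀ y, f xstar ≤ f y)
    (c : ℝ) (hc : 0 < c)
    (hint : ∀ x : EuclideanSpace ℝ (Fin n),
      (∫ t in (0:ℝ)..1, ‖gradient f (xstar + t • (x - xstar))‖) ≤ c * ‖gradient f x‖) :
    ∀ x : EuclideanSpace ℝ (Fin n),
      1 / c * (f x - f xstar) ≤ ‖gradient f x‖ * ‖x - xstar‖ := by
  intro x
  set v := x - xstar with hv
  set p : ℝ → EuclideanSpace ℝ (Fin n) := fun t => xstar + t • v with hp
  have hpderiv : ∀ t : ℝ, HasDerivAt p v t := by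
    intro t
    have h := ((hasDerivAt_id t).smul_const v).const_add xstar
    rw [one_smul] at h
    exact h
  have hgderiv : ∀ t : ℝ,
      HasDerivAt (fun s => f (p s)) ⟪gradient f (p t), v⟫ t := by
    intro t
    have h1 : HasGradientAt f (gradient f (p t)) (p t) :=
      (hdiff (p t)).hasGradientAt
    have h2 := h1.hasFDerivAt.comp_hasDerivAt t (hpderiv t)
    exact h2
  have hcontp : Continuous p := by
    continuity
  have hcontg : Continuous fun t => ⟪gradient f (p t), v⟫ :=
    (hcont.comp hcontp).inner continuous_const
  have hFTC : ∫ t in (0:ℝ)..1, ⟪gradient f (p t), v⟫ = f (p 1) - f (p 0) :=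
    intervalIntegral.integral_eq_sub_of_hasDerivAt
      (fun t _ => hgderiv t) (hcontg.intervalIntegrable 0 1)
  have hp1 : p 1 = x := by simp [hp, hv]
  have hp0 : p 0 = xstar := by simp [hp]
  have key : f x - f xstar ≤ (∫ t in (0:ℝ)..1, ‖gradient f (p t)‖) * ‖v‖ := by
    rw [← hp1, ← hp0, ← hFTC, ← intervalIntegral.integral_mul_const]
    apply intervalIntegral.integral_mono_on (by norm_num)
      (hcontg.intervalIntegrable 0 1)
      (((hcont.comp hcontp).norm.mul continuous_const).intervalIntegrable 0 1)
    intro t _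
    exact real_inner_le_norm _ _
  have hbound : (∫ t in (0:ℝ)..1, ‖gradient f (p t)‖) * ‖v‖ ≤
      (c * ‖gradient f x‖) * ‖v‖ :=
    mul_le_mul_of_nonneg_right (hint x) (norm_nonneg v)
  have : f x - f xstar ≤ c * (‖gradient f x‖ * ‖v‖) := by
    calc f x - f xstar ≤ _ := key
    _ ≤ (c * ‖gradient f x‖) * ‖v‖ := hbound
    _ = c * (‖gradient f x‖ * ‖v‖) := by ring
  rw [div_mul_eq_mul_div, div_le_iff₀ hc, one_mul]
  linarith [this]
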